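/- For q > 0 and p ≥ 0, the function l satisfies 0 ≤ l(t) ≤ p for all t ≥ 0, l is nondecreasing on [0,∞) (strictly increasing if p > 0), and |l(t) − p| ≤ (p²/(2(p+q)))·e^{−2qt} for all t ≥ 0; in particular l(t) converges to p exponentially fast as t → ∞. -/
import Mathlib


/-- For `q > 0` and `p ≥ 0`: `0 ≤ l(t) ≤ p` for all `t ≥ 0`, `l` is nondecreasing on
`[0,∞)` (strictly increasing if `p > 0`), and `|l(t) − p| ≤ (p²/(2(p+q)))·e^{−2qt}`
for all `t ≥ 0`; in particular `l(t) → p` exponentially fast as `t → ∞`. -/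
theorem stmt_4 (p q : ℝ) (hq : 0 < q) (hp : 0 ≤ p)
    (l : ℝ → ℝ)
    (hl : ∀ t : ℝ, l t = p * (1 - 2 * p * q / ((2 * q + p) ^ 2 * Real.exp (2 * q * t) - p ^ 2))) :
    (∀ t : ℝ, 0 ≤ t → 0 ≤ l t ∧ l t ≤ p) ∧
    MonotoneOn l (Set.Ici (0 : ℝ)) ∧
    (0 < p → StrictMonoOn l (Set.Ici (0 : ℝ))) ∧
    (∀ t : ℝ, 0 ≤ t → |l t - p| ≤ p ^ 2 / (2 * (p + q)) * Real.exp (-2 * q * t)) := by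
  have hE : ∀ t : ℝ, 0 ≤ t → 1 ≤ Real.exp (2 * q * t) := fun t ht =>
    Real.one_le_exp (by positivity)
  have hD : ∀ t : ℝ, 0 ≤ t →
      4 * q * (q + p) ≤ (2 * q + p) ^ 2 * Real.exp (2 * q * t) - p ^ 2 := by
    intro t ht
    nlinarith [hE t ht, sq_nonneg (2 * q + p)]
  have hDpos : ∀ t : ℝ, 0 ≤ t →
      0 < (2 * q + p) ^ 2 * Real.exp (2 * q * t) - p ^ 2 := by
    intro t ht
    have := hD t ht
    nlinarith
  refine ⟨?_, ?_, ?_, ?_⟩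
  · intro t ht
    have hDp := hDpos t ht
    have hDd := hD t ht
    have h1 : 2 * p * q / ((2 * q + p) ^ 2 * Real.exp (2 * q * t) - p ^ 2) ≤ 1 := by
      rw [div_le_one hDp]; nlinarith
    have h0 : 0 ≤ 2 * p * q / ((2 * q + p) ^ 2 * Real.exp (2 * q * t) - p ^ 2) :=
      div_nonneg (by positivity) hDp.le
    rw [hl]
    constructor
    · apply mul_nonneg hp; linarith
    · nlinarith
  · intro s hs t ht hst
    simp only [Set.mem_Ici] at hs ht
    rw [hl, hl]
    have hDs := hDpos s hs
    have hDt := hDpos t ht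
    have hEle : Real.exp (2 * q * s) ≤ Real.exp (2 * q * t) :=
      Real.exp_le_exp.mpr (by nlinarith)
    have hDle : (2 * q + p) ^ 2 * Real.exp (2 * q * s) - p ^ 2 ≤
        (2 * q + p) ^ 2 * Real.exp (2 * q * t) - p ^ 2 := by nlinarith [sq_nonneg (2*q+p)]
    gcongr
  · intro hppos s hs t ht hst
    simp only [Set.mem_Ici] at hs ht
    rw [hl, hl]
    have hDs := hDpos s hs
    have hDt := hDpos t ht
    have hElt : Real.exp (2 * q * s) < Real.exp (2 * q * t) :=
      Real.exp_lt_exp.mpr (by nlinarith)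
    have hDlt : (2 * q + p) ^ 2 * Real.exp (2 * q * s) - p ^ 2 <
        (2 * q + p) ^ 2 * Real.exp (2 * q * t) - p ^ 2 := by
      have := mul_lt_mul_of_pos_left hElt (by positivity : (0:ℝ) < (2 * q + p) ^ 2)
      linarith
    have hlt : 2 * p * q / ((2 * q + p) ^ 2 * Real.exp (2 * q * t) - p ^ 2) <
        2 * p * q / ((2 * q + p) ^ 2 * Real.exp (2 * q * s) - p ^ 2) :=
      div_lt_div_of_pos_left (by positivity) hDs hDlt
    have := mul_lt_mul_of_pos_left (by linarith : (1 : ℝ) - 2 * p * q /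
        ((2 * q + p) ^ 2 * Real.exp (2 * q * s) - p ^ 2) <
        1 - 2 * p * q / ((2 * q + p) ^ 2 * Real.exp (2 * q * t) - p ^ 2)) hppos
    linarith
  · intro t ht
    have hDp := hDpos t ht
    have hEt := hE t ht
    have hEpos : 0 < Real.exp (2 * q * t) := Real.exp_pos _
    have habs : l t - p =
        -(2 * p ^ 2 * q / ((2 * q + p) ^ 2 * Real.exp (2 * q * t) - p ^ 2)) := by
      rw [hl]; field_simp; ring
    rw [habs, abs_neg, abs_of_nonneg (by positivity)]
    have hexpneg : Real.exp (-2 * q * t) = (Real.exp (2 * q * t))⁻¹ := by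
      rw [← Real.exp_neg]; ring_nf
    have hpq : 0 < p + q := by linarith
    have hrw : p ^ 2 / (2 * (p + q)) * (Real.exp (2 * q * t))⁻¹
        = p ^ 2 / (2 * (p + q) * Real.exp (2 * q * t)) := by
      field_simp
    rw [hexpneg, hrw, div_le_div_iff₀ hDp (by positivity)]
    nlinarith [mul_nonneg (mul_nonneg (sq_nonneg p) (sq_nonneg p))
      (by linarith : (0:ℝ) ≤ Real.exp (2 * q * t) - 1)]
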